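/- arXiv:math/9210207 — 3 statements merged into one kernel-verified Lean document; each statement's English description precedes it below -/
import Mathlib

section
/- If μ is a probability measure on ℝⁿ whose characteristic function has the form x ↦ f(‖x‖) for a norm ‖·‖ on ℝⁿ and an even function f : ℝ → ℝ, then there exists a probability measure ν on ℝ whose characteristic function equals f. -/
open MeasureTheory Complex
open scoped RealInnerProductSpace

/-- The characteristic function of a measure on `ℝⁿ`, `x ↦ ∫ exp(-i⟨x,ξ⟩) dμ(ξ)`. -/
noncomputable def charFunE {n : ℕ} (μ : Measure (EuclideanSpace ℝ (Fin n)))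
    (x : EuclideanSpace ℝ (Fin n)) : ℂ :=
  ∫ ξ, Complex.exp (-(Complex.I) * ((inner ℝ x ξ : ℝ) : ℂ)) ∂μ

/-- The characteristic function of a measure on `ℝ`. -/
noncomputable def charFunR (ν : Measure ℝ) (t : ℝ) : ℂ :=
  ∫ y, Complex.exp (-(Complex.I) * ((t * y : ℝ) : ℂ)) ∂ν

theorem schoenberg_stmt0 (n : ℕ) (hn : 0 < n)
    (N : EuclideanSpace ℝ (Fin n) → ℝ)
    (hN0 : ∀ x, N x = 0 ↔ x = 0)
    (hNsmul : ∀ (a : ℝ) x, N (a • x) = |a| * N x)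
    (hNadd : ∀ x y, N (x + y) ≤ N x + N y)
    (f : ℝ → ℝ) (hf_even : ∀ t, f (-t) = f t)
    (μ : Measure (EuclideanSpace ℝ (Fin n))) [IsProbabilityMeasure μ]
    (hμ : ∀ x, charFunE μ x = (f (N x) : ℂ)) :
    ∃ ν : Measure ℝ, IsProbabilityMeasure ν ∧ ∀ t : ℝ, charFunR ν t = (f t : ℂ) := by
  -- pick a vector of norm 1
  obtain ⟨i⟩ : Nonempty (Fin n) := ⟨⟨0, hn⟩⟩
  set e : EuclideanSpace ℝ (Fin n) := EuclideanSpace.single i (1 : ℝ) with he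
  have he0 : e ≠ 0 := by
    intro h
    have h1 : e i = 0 := by rw [h]; rfl
    rw [he, EuclideanSpace.single_apply] at h1
    simp at h1
  have hNe : N e ≠ 0 := fun h => he0 ((hN0 e).1 h)
  have hNepos : 0 < N e := by
    rcases lt_trichotomy (N e) 0 with h | h | h
    · exfalso
      have h1 : N (e + -e) ≤ N e + N (-e) := hNadd e (-e)
      have h2 : N (-e) = N e := by
        have := hNsmul (-1 : ℝ) e; simpa using this
      have h3 : N (0 : EuclideanSpace ℝ (Fin n)) = 0 := (hN0 0).2 rfl
      simp only [add_neg_cancel, h3, h2] at h1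
      linarith
    · exact absurd h hNe
    · exact h
  set x₀ : EuclideanSpace ℝ (Fin n) := (N e)⁻¹ • e with hx₀
  have hNx₀ : N x₀ = 1 := by
    rw [hx₀, hNsmul, abs_inv, abs_of_pos hNepos]
    field_simp
  -- continuous linear map ξ ↦ ⟨x₀, ξ⟩
  set L : EuclideanSpace ℝ (Fin n) → ℝ := fun ξ => (inner ℝ x₀ ξ : ℝ) with hL
  have hLmeas : Measurable L := by
    have : Continuous L := continuous_const.inner continuous_id
    exact this.measurable
  refine ⟨μ.map L, ?_, ?_⟩
  · exact Measure.isProbabilityMeasure_map hLmeas.aemeasurable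
  · intro t
    rw [charFunR, integral_map hLmeas.aemeasurable]
    · have : (∫ ξ, Complex.exp (-(Complex.I) * ((t * L ξ : ℝ) : ℂ)) ∂μ)
          = charFunE μ (t • x₀) := by
        rw [charFunE]
        congr 1
        ext ξ
        congr 2
        push_cast
        rw [hL]
        rw [real_inner_smul_left]
        push_cast
        ring
      rw [this, hμ, hNsmul, hNx₀, mul_one]
      rcases le_or_gt 0 t with h | h
      · rw [_root_.abs_of_nonneg h]
      · rw [abs_of_neg h, hf_even]  -- |t| = -t
    · exact (Complex.continuous_exp.comp (by continuity)).aestronglyMeasurable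
end

section
/- If μ is a probability measure on ℝⁿ whose characteristic function equals f(‖x‖) for some norm ‖·‖ and even function f, then for every nonzero x ∈ ℝⁿ the pushforward of μ under the map ξ ↦ ⟨x,ξ⟩/‖x‖ is the same measure ν on ℝ, independent of the choice of x; moreover the characteristic function of ν equals f. -/
open MeasureTheory Complex

open Set Filter Topology
open scoped Real NNReal ENNReal

section Uniqueness

/-- Pushforwards to any `AddCircle T` agree when characteristic functions agree. -/
lemma map_addCircle_eq {ν₁ ν₂ : Measure ℝ} [IsProbabilityMeasure ν₁] [IsProbabilityMeasure ν₂]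
    (h : ∀ t, charFunR ν₁ t = charFunR ν₂ t) (T : ℝ) [hT : Fact (0 < T)] :
    Measure.map ((↑) : ℝ → AddCircle T) ν₁ = Measure.map ((↑) : ℝ → AddCircle T) ν₂ := by
  have hq : Measurable ((↑) : ℝ → AddCircle T) := AddCircle.measurable_mk'
  set m₁ := Measure.map ((↑) : ℝ → AddCircle T) ν₁ with hm₁
  set m₂ := Measure.map ((↑) : ℝ → AddCircle T) ν₂ with hm₂
  haveI : IsProbabilityMeasure m₁ := Measure.isProbabilityMeasure_map hq.aemeasurable
  haveI : IsProbabilityMeasure m₂ := Measure.isProbabilityMeasure_map hq.aemeasurable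
  have hfour : ∀ k : ℤ, ∫ z, fourier k z ∂m₁ = ∫ z, fourier k z ∂m₂ := by
    intro k
    have h1 : ∀ (ν : Measure ℝ), ∫ z, fourier k z ∂(Measure.map ((↑) : ℝ → AddCircle T) ν)
        = charFunR ν (-(2 * Real.pi * k / T)) := by
      intro ν
      rw [MeasureTheory.integral_map hq.aemeasurable
        ((map_continuous (fourier k)).aestronglyMeasurable)]
      rw [charFunR]
      refine integral_congr_ae (Filter.Eventually.of_forall fun y => ?_)
      show (fourier k) ((y : ℝ) : AddCircle T)
          = Complex.exp (-(Complex.I) * ((-(2 * Real.pi * k / T) * y : ℝ) : ℂ))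
      rw [fourier_coe_apply]
      congr 1
      push_cast
      ring
    rw [hm₁, hm₂, h1 ν₁, h1 ν₂, h]
  have hint : ∀ (m : Measure (AddCircle T)) [IsProbabilityMeasure m] (g : C(AddCircle T, ℂ)),
      Integrable (⇑g) m := fun m _ g => (BoundedContinuousFunction.mkOfCompact g).integrable m
  have key : ∀ g : C(AddCircle T, ℂ), ∫ z, g z ∂m₁ = ∫ z, g z ∂m₂ := by
    have hlip : ∀ (m : Measure (AddCircle T)) [IsProbabilityMeasure m],
        LipschitzWith 1 (fun g : C(AddCircle T, ℂ) => ∫ z, g z ∂m) := by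
      intro m _
      refine LipschitzWith.of_dist_le_mul fun g g' => ?_
      rw [dist_eq_norm, ← integral_sub (hint m g) (hint m g')]
      calc ‖∫ z, (g z - g' z) ∂m‖ ≤ dist g g' * (m Set.univ).toReal :=
            norm_integral_le_of_norm_le_const (Filter.Eventually.of_forall fun z => by
              rw [← dist_eq_norm]; exact ContinuousMap.dist_apply_le_dist z)
        _ = 1 * dist g g' := by simp
    have hcl : IsClosed {g : C(AddCircle T, ℂ) | ∫ z, g z ∂m₁ = ∫ z, g z ∂m₂} :=
      isClosed_eq (hlip m₁).continuous (hlip m₂).continuous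
    have hsub : (Submodule.span ℂ (Set.range (@fourier T)) : Set C(AddCircle T, ℂ)) ⊆
        {g : C(AddCircle T, ℂ) | ∫ z, g z ∂m₁ = ∫ z, g z ∂m₂} := by
      intro g hg
      induction hg using Submodule.span_induction with
      | mem g hgmem =>
        obtain ⟨k, rfl⟩ := hgmem
        exact hfour k
      | zero => simp [Set.mem_setOf_eq]
      | add g g' hg hg' ihg ihg' =>
        simp only [Set.mem_setOf_eq, ContinuousMap.add_apply] at *
        rw [integral_add (hint m₁ g) (hint m₁ g'), integral_add (hint m₂ g) (hint m₂ g'),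
          ihg, ihg']
      | smul c g hg ihg =>
        simp only [Set.mem_setOf_eq, ContinuousMap.smul_apply] at *
        rw [integral_smul, integral_smul, ihg]
    intro g
    have hmem : g ∈ (Submodule.span ℂ (Set.range (@fourier T))).topologicalClosure := by
      rw [span_fourier_closure_eq_top]; trivial
    exact closure_minimal hsub hcl hmem
  refine ext_of_forall_lintegral_eq_of_IsFiniteMeasure fun f => ?_
  have hre : ∫ z, ((f z : ℝ)) ∂m₁ = ∫ z, ((f z : ℝ)) ∂m₂ := by
    have hcont : Continuous fun z : AddCircle T => ((f z : ℝ)) :=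
      NNReal.continuous_coe.comp f.continuous
    have hInt : ∀ (m : Measure (AddCircle T)) [IsProbabilityMeasure m],
        Integrable (fun z => ((f z : ℝ))) m := fun m _ =>
      (BoundedContinuousFunction.mkOfCompact ⟨fun z => ((f z : ℝ)), hcont⟩).integrable m
    have hg := key ⟨fun z => ((f z : ℝ) : ℂ), Complex.continuous_ofReal.comp hcont⟩
    simp only [ContinuousMap.coe_mk] at hg
    have e1 : ∫ z, ((f z : ℝ) : ℂ) ∂m₁ = ((∫ z, ((f z : ℝ)) ∂m₁ : ℝ) : ℂ) := by
      have := Complex.ofRealCLM.integral_comp_comm (hInt m₁)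
      simpa using this
    have e2 : ∫ z, ((f z : ℝ) : ℂ) ∂m₂ = ((∫ z, ((f z : ℝ)) ∂m₂ : ℝ) : ℂ) := by
      have := Complex.ofRealCLM.integral_comp_comm (hInt m₂)
      simpa using this
    rw [e1, e2] at hg
    exact_mod_cast hg
  have h1 := BoundedContinuousFunction.toReal_lintegral_coe_eq_integral f m₁
  have h2 := BoundedContinuousFunction.toReal_lintegral_coe_eq_integral f m₂
  have hf1 : ∫⁻ x, (f x : ℝ≥0∞) ∂m₁ ≠ ⊤ :=
    (BoundedContinuousFunction.lintegral_lt_top_of_nnreal m₁ f).ne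
  have hf2 : ∫⁻ x, (f x : ℝ≥0∞) ∂m₂ ≠ ⊤ :=
    (BoundedContinuousFunction.lintegral_lt_top_of_nnreal m₂ f).ne
  rw [← ENNReal.toReal_eq_toReal_iff' hf1 hf2, h1, h2]
  exact hre

/-- One-sided comparison of `Ioc` measures from equality of circle pushforwards. -/
lemma meas_Ioc_le {ν₁ ν₂ : Measure ℝ} [IsProbabilityMeasure ν₁] [IsProbabilityMeasure ν₂]
    (hmap : ∀ (T : ℝ) [Fact (0 < T)],
      Measure.map ((↑) : ℝ → AddCircle T) ν₁ = Measure.map ((↑) : ℝ → AddCircle T) ν₂)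
    {a b : ℝ} (hab : a < b) : ν₁ (Set.Ioc a b) ≤ ν₂ (Set.Ioc a b) := by
  have key : ∀ T : ℝ, b - a ≤ T →
      ν₁ (Set.Ioc a b) ≤ ν₂ (Set.Ioc a b) + (ν₂ (Set.Ioi (a + T)) + ν₂ (Set.Iic (b - T))) := by
    intro T hTba
    have hT0 : 0 < T := lt_of_lt_of_le (by linarith) hTba
    haveI hT : Fact (0 < T) := ⟨hT0⟩
    have hq : Measurable ((↑) : ℝ → AddCircle T) := AddCircle.measurable_mk'
    set S : Set (AddCircle T) :=
      (AddCircle.measurableEquivIoc T a) ⁻¹' (Subtype.val ⁻¹' Set.Ioc a b) with hSdef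
    have hS : MeasurableSet S :=
      (AddCircle.measurableEquivIoc T a).measurable (measurable_subtype_coe measurableSet_Ioc)
    have hpre : ∀ y : ℝ, ((y : AddCircle T) ∈ S) ↔ toIocMod hT.out a y ∈ Set.Ioc a b := by
      intro y
      simp only [hSdef, Set.mem_preimage]
      constructor
      · intro hy
        exact hy
      · intro hy
        exact hy
    have sub1 : Set.Ioc a b ⊆ ((↑) : ℝ → AddCircle T) ⁻¹' S := by
      intro y hy
      rw [Set.mem_preimage, hpre y]
      rwa [toIocMod_eq_self hT.out |>.mpr ⟨hy.1, hy.2.trans (by linarith)⟩]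
    have sub2 : ((↑) : ℝ → AddCircle T) ⁻¹' S ⊆
        Set.Ioc a b ∪ (Set.Ioi (a + T) ∪ Set.Iic (b - T)) := by
      intro y hy
      rw [Set.mem_preimage, hpre y] at hy
      set c := toIocMod hT.out a y with hc
      set k := toIocDiv hT.out a y with hk
      have hyc : y - k • T = c := self_sub_toIocDiv_zsmul hT.out a y
      have hyck : y = c + (k : ℝ) * T := by
        have : (k : ℝ) * T = (k • T : ℝ) := by simp [zsmul_eq_mul]
        rw [this]; linarith [hyc]
      rcases lt_trichotomy k 0 with hk0 | hk0 | hk0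
      · right; right
        have hk1' : k ≤ -1 := by omega
        have hk1 : (k : ℝ) ≤ -1 := by exact_mod_cast hk1'
        have : (k : ℝ) * T ≤ -T := by nlinarith
        simp only [Set.mem_Iic]
        have := hy.2
        linarith
      · left
        rw [hyck, hk0]
        simpa using hy
      · right; left
        have hk1 : (1 : ℝ) ≤ (k : ℝ) := by exact_mod_cast hk0
        have : T ≤ (k : ℝ) * T := by nlinarith
        simp only [Set.mem_Ioi]
        have := hy.1
        linarith
    calc ν₁ (Set.Ioc a b) ≤ ν₁ (((↑) : ℝ → AddCircle T) ⁻¹' S) := measure_mono sub1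
      _ = Measure.map ((↑) : ℝ → AddCircle T) ν₁ S := (Measure.map_apply hq hS).symm
      _ = Measure.map ((↑) : ℝ → AddCircle T) ν₂ S := by rw [hmap T]
      _ = ν₂ (((↑) : ℝ → AddCircle T) ⁻¹' S) := Measure.map_apply hq hS
      _ ≤ ν₂ (Set.Ioc a b ∪ (Set.Ioi (a + T) ∪ Set.Iic (b - T))) := measure_mono sub2
      _ ≤ ν₂ (Set.Ioc a b) + ν₂ (Set.Ioi (a + T) ∪ Set.Iic (b - T)) := measure_union_le _ _
      _ ≤ ν₂ (Set.Ioc a b) + (ν₂ (Set.Ioi (a + T)) + ν₂ (Set.Iic (b - T))) := by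
          gcongr; exact measure_union_le _ _
  -- limit as T = n → ∞
  have h1 : Tendsto (fun m : ℕ => ν₂ (Set.Ioi (a + m))) atTop (𝓝 0) := by
    have hiInter : ⋂ m : ℕ, Set.Ioi (a + (m : ℝ)) = ∅ := by
      ext x
      simp only [Set.mem_iInter, Set.mem_Ioi, Set.mem_empty_iff_false, iff_false, not_forall,
        not_lt]
      obtain ⟨m, hm⟩ := exists_nat_gt (x - a)
      exact ⟨m, by linarith⟩
    have := MeasureTheory.tendsto_measure_iInter_atTop (μ := ν₂)
      (s := fun m : ℕ => Set.Ioi (a + (m : ℝ)))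
      (fun m => measurableSet_Ioi.nullMeasurableSet)
      (fun i j hij => Set.Ioi_subset_Ioi (by have : (i : ℝ) ≤ (j : ℝ) := Nat.cast_le.mpr hij; linarith))
      ⟨0, measure_ne_top _ _⟩
    rw [hiInter] at this
    simpa [Function.comp_def] using this
  have h2 : Tendsto (fun m : ℕ => ν₂ (Set.Iic (b - m))) atTop (𝓝 0) := by
    have hiInter : ⋂ m : ℕ, Set.Iic (b - (m : ℝ)) = ∅ := by
      ext x
      simp only [Set.mem_iInter, Set.mem_Iic, Set.mem_empty_iff_false, iff_false, not_forall,
        not_le]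
      obtain ⟨m, hm⟩ := exists_nat_gt (b - x)
      exact ⟨m, by linarith⟩
    have := MeasureTheory.tendsto_measure_iInter_atTop (μ := ν₂)
      (s := fun m : ℕ => Set.Iic (b - (m : ℝ)))
      (fun m => measurableSet_Iic.nullMeasurableSet)
      (fun i j hij => Set.Iic_subset_Iic.mpr (by
        have : (i : ℝ) ≤ (j : ℝ) := Nat.cast_le.mpr hij
        linarith))
      ⟨0, measure_ne_top _ _⟩
    rw [hiInter] at this
    simpa [Function.comp_def] using this
  have hlim : Tendsto (fun m : ℕ =>
      ν₂ (Set.Ioc a b) + (ν₂ (Set.Ioi (a + m)) + ν₂ (Set.Iic (b - m)))) atTop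
      (𝓝 (ν₂ (Set.Ioc a b))) := by
    have hconst : Tendsto (fun _ : ℕ => ν₂ (Set.Ioc a b)) atTop (𝓝 (ν₂ (Set.Ioc a b))) :=
      tendsto_const_nhds
    have := hconst.add (h1.add h2)
    simpa using this
  refine ge_of_tendsto hlim ?_
  filter_upwards [eventually_ge_atTop ⌈b - a⌉₊] with m hm
  exact key m (le_trans (Nat.le_ceil _) (by exact_mod_cast hm))

/-- Uniqueness: probability measures on ℝ with equal characteristic functions are equal. -/
lemma charFunR_ext {ν₁ ν₂ : Measure ℝ} [IsProbabilityMeasure ν₁] [IsProbabilityMeasure ν₂]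
    (h : ∀ t, charFunR ν₁ t = charFunR ν₂ t) : ν₁ = ν₂ := by
  have hmap := fun (T : ℝ) [Fact (0 < T)] => map_addCircle_eq h T
  have hmap' := fun (T : ℝ) [Fact (0 < T)] => (map_addCircle_eq h T).symm
  refine Measure.ext_of_Ioc ν₁ ν₂ fun a b hab => ?_
  exact le_antisymm (meas_Ioc_le hmap hab) (meas_Ioc_le hmap' hab)

end Uniqueness

theorem schoenberg_stmt1 (n : ℕ) (hn : 0 < n)
    (N : EuclideanSpace ℝ (Fin n) → ℝ)
    (hN0 : ∀ x, N x = 0 ↔ x = 0)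
    (hNsmul : ∀ (a : ℝ) x, N (a • x) = |a| * N x)
    (hNadd : ∀ x y, N (x + y) ≤ N x + N y)
    (f : ℝ → ℝ) (hf_even : ∀ t, f (-t) = f t)
    (μ : Measure (EuclideanSpace ℝ (Fin n))) [IsProbabilityMeasure μ]
    (hμ : ∀ x, charFunE μ x = (f (N x) : ℂ)) :
    ∃ ν : Measure ℝ, IsProbabilityMeasure ν ∧
      (∀ x : EuclideanSpace ℝ (Fin n), x ≠ 0 →
        Measure.map (fun ξ => (inner ℝ x ξ : ℝ) / N x) μ = ν) ∧
      (∀ t : ℝ, charFunR ν t = (f t : ℂ)) := by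
  -- positivity of the norm
  have hNneg : ∀ x, 0 ≤ N x := by
    intro x
    have h1 := hNadd x (-x)
    have h2 : N (-x) = N x := by
      have := hNsmul (-1) x
      simpa using this
    have h3 : N (x + -x) = 0 := by
      rw [add_neg_cancel]
      exact (hN0 0).mpr rfl
    rw [h3, h2] at h1
    linarith
  have hNpos : ∀ x : EuclideanSpace ℝ (Fin n), x ≠ 0 → 0 < N x := by
    intro x hx
    rcases lt_or_eq_of_le (hNneg x) with h | h
    · exact h
    · exact absurd ((hN0 x).mp h.symm) hx
  have hmeas : ∀ x : EuclideanSpace ℝ (Fin n),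
      Measurable (fun ξ : EuclideanSpace ℝ (Fin n) => (inner ℝ x ξ : ℝ) / N x) := by
    intro x
    exact ((continuous_const.inner continuous_id).div_const (N x)).measurable
  -- characteristic function of pushforward
  have hA : ∀ (x : EuclideanSpace ℝ (Fin n)), x ≠ 0 → ∀ t : ℝ,
      charFunR (Measure.map (fun ξ => (inner ℝ x ξ : ℝ) / N x) μ) t = (f t : ℂ) := by
    intro x hx t
    have hNx : 0 < N x := hNpos x hx
    have hcont : Continuous fun y : ℝ => Complex.exp (-(Complex.I) * ((t * y : ℝ) : ℂ)) := by
      fun_prop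
    rw [charFunR, MeasureTheory.integral_map (hmeas x).aemeasurable hcont.aestronglyMeasurable]
    have hptw : ∀ ξ : EuclideanSpace ℝ (Fin n),
        Complex.exp (-(Complex.I) * ((t * ((inner ℝ x ξ : ℝ) / N x) : ℝ) : ℂ))
          = Complex.exp (-(Complex.I) * ((inner ℝ ((t / N x) • x) ξ : ℝ) : ℂ)) := by
      intro ξ
      rw [real_inner_smul_left,
        show t * ((inner ℝ x ξ : ℝ) / N x) = t / N x * (inner ℝ x ξ : ℝ) from by ring]
    rw [integral_congr_ae (Filter.Eventually.of_forall hptw)]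
    have := hμ ((t / N x) • x)
    rw [charFunE] at this
    rw [this, hNsmul]
    have habs : |t / N x| * N x = |t| := by
      rw [abs_div, abs_of_pos hNx]
      field_simp
    rw [habs]
    rcases le_or_gt 0 t with ht | ht
    · rw [_root_.abs_of_nonneg ht]
    · rw [_root_.abs_of_neg ht, hf_even]
  -- choose base point
  set x₀ : EuclideanSpace ℝ (Fin n) := EuclideanSpace.single ⟨0, hn⟩ 1 with hx₀def
  have hx₀ne : x₀ ≠ 0 := by
    intro h
    have := congrArg (fun v : EuclideanSpace ℝ (Fin n) => v ⟨0, hn⟩) h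
    simp [hx₀def, EuclideanSpace.single_apply] at this
  set ν : Measure ℝ := Measure.map (fun ξ => (inner ℝ x₀ ξ : ℝ) / N x₀) μ with hνdef
  haveI hνprob : IsProbabilityMeasure ν := Measure.isProbabilityMeasure_map (hmeas x₀).aemeasurable
  refine ⟨ν, hνprob, ?_, hA x₀ hx₀ne⟩
  intro x hx
  haveI : IsProbabilityMeasure (Measure.map (fun ξ => (inner ℝ x ξ : ℝ) / N x) μ) :=
    Measure.isProbabilityMeasure_map (hmeas x).aemeasurable
  exact charFunR_ext fun t => by rw [hA x hx t, hA x₀ hx₀ne t]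
end

section
/- For every x ∈ ℝⁿ and β ∈ (-1,2)∖{0}, if μ is a probability measure on ℝⁿ with characteristic function f(‖x‖) and ν is its common one-dimensional projection, then ∫_{ℝⁿ} |⟨x,ξ⟩|^β dμ(ξ) = ‖x‖^β · ∫_ℝ |t|^β dν(t) (where both sides may be infinite). -/
open MeasureTheory Complex

theorem schoenberg_stmt6 (n : ℕ) (hn : 0 < n)
    (N : EuclideanSpace ℝ (Fin n) → ℝ)
    (hN0 : ∀ x, N x = 0 ↔ x = 0)
    (hNsmul : ∀ (a : ℝ) x, N (a • x) = |a| * N x)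
    (hNadd : ∀ x y, N (x + y) ≤ N x + N y)
    (f : ℝ → ℝ) (hf_even : ∀ t, f (-t) = f t)
    (μ : Measure (EuclideanSpace ℝ (Fin n))) [IsProbabilityMeasure μ]
    (hμ : ∀ x, charFunE μ x = (f (N x) : ℂ))
    (ν : Measure ℝ)
    (hν : ∀ x : EuclideanSpace ℝ (Fin n), x ≠ 0 →
      Measure.map (fun ξ => (inner ℝ x ξ : ℝ) / N x) μ = ν)
    (β : ℝ) (hβ0 : -1 < β) (hβ2 : β < 2) (hβne : β ≠ 0)
    (x : EuclideanSpace ℝ (Fin n)) :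
    ∫⁻ ξ, ENNReal.ofReal (|(inner ℝ x ξ : ℝ)| ^ β) ∂μ =
      ENNReal.ofReal (N x ^ β) * ∫⁻ t, ENNReal.ofReal (|t| ^ β) ∂ν := by
  rcases eq_or_ne x 0 with rfl | hx
  · have h0 : N 0 = 0 := (hN0 0).mpr rfl
    have hz : ∀ ξ : EuclideanSpace ℝ (Fin n),
        ENNReal.ofReal (|(inner ℝ (0 : EuclideanSpace ℝ (Fin n)) ξ : ℝ)| ^ β) = 0 := by
      intro ξ
      rw [inner_zero_left]
      simp [Real.zero_rpow hβne]
    simp [h0, Real.zero_rpow hβne, hz]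
  · have hNnn : 0 ≤ N x := by
      have h1 : N (x + (-1 : ℝ) • x) ≤ N x + N ((-1 : ℝ) • x) := hNadd _ _
      have h2 : x + (-1 : ℝ) • x = 0 := by simp
      rw [h2, (hN0 0).mpr rfl, hNsmul] at h1
      simp at h1
      linarith
    have hNpos : 0 < N x :=
      lt_of_le_of_ne hNnn (fun h => hx ((hN0 x).mp h.symm))
    have hcpos : 0 < N x ^ β := Real.rpow_pos_of_pos hNpos β
    have hmeas : Measurable (fun ξ : EuclideanSpace ℝ (Fin n) =>
        (inner ℝ x ξ : ℝ) / N x) := by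
      exact ((continuous_const.inner continuous_id).div_const _).measurable
    have hmf : Measurable (fun t : ℝ => ENNReal.ofReal (|t| ^ β)) :=
      (measurable_id.abs.pow measurable_const).ennreal_ofReal
    rw [← hν x hx, lintegral_map hmf hmeas]
    have key : ∀ ξ : EuclideanSpace ℝ (Fin n),
        ENNReal.ofReal (|(inner ℝ x ξ : ℝ) / N x| ^ β)
        = ENNReal.ofReal ((N x ^ β)⁻¹) * ENNReal.ofReal (|(inner ℝ x ξ : ℝ)| ^ β) := by
      intro ξ
      rw [abs_div, abs_of_pos hNpos, Real.div_rpow (abs_nonneg _) hNpos.le,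
        div_eq_mul_inv, mul_comm, ENNReal.ofReal_mul (by positivity)]
    simp_rw [key]
    rw [lintegral_const_mul _ (by
      exact (((continuous_const.inner continuous_id).measurable).abs.pow measurable_const).ennreal_ofReal),
      ← mul_assoc, ← ENNReal.ofReal_mul hcpos.le, mul_inv_cancel₀ hcpos.ne',
      ENNReal.ofReal_one, one_mul]
end
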